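/- arXiv:2310.09222 — 3 statements merged into one kernel-verified Lean document; each statement's English description precedes it below -/
import Mathlib

section
/- If a joint distribution P is Markov with respect to a DAG G (factorizes as the product of conditional distributions of each node given its parents), then each variable is conditionally independent of any single non-parent non-descendant given its parents. -/
variable {V : Type*}

/-- A directed graph (given by its adjacency relation) is acyclic iff there is no
nonempty directed closed walk, i.e. the transitive closure is irreflexive. -/
def Acyclic (G : V → V → Prop) : Prop := ∀ v, ¬ Relation.TransGen G v v

/-- `Y` is a descendant of `X`: there is a nonempty directed path from `X` to `Y`. -/
def Descendant (G : V → V → Prop) (x y : V) : Prop := Relation.TransGen G x y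

/-- The parents of a node. -/
def Pa (G : V → V → Prop) (x : V) : Set V := {w | G w x}

/-- An (undirected) path between `x` and `y`: a list of distinct vertices starting at `x`,
ending at `y`, consecutive vertices adjacent in either direction, of length at least 2. -/
def IsTrail (G : V → V → Prop) (p : List V) (x y : V) : Prop :=
  p.Chain' (fun a b => G a b ∨ G b a) ∧ p.head? = some x ∧ p.getLast? = some y ∧
    p.Nodup ∧ 2 ≤ p.length

/-- A path is blocked by `Z` if it contains a non-collider belonging to `Z`, or a
collider `w` such that neither `w` nor any descendant of `w` belongs to `Z`. -/
def Blocked (G : V → V → Prop) (Z : Set V) (p : List V) : Prop :=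
  (∃ a w b, [a, w, b] <:+: p ∧ ¬(G a w ∧ G b w) ∧ w ∈ Z) ∨
  (∃ a w b, [a, w, b] <:+: p ∧ G a w ∧ G b w ∧ w ∉ Z ∧
    ∀ d, Relation.TransGen G w d → d ∉ Z)

/-- `Z` d-separates `x` and `y` iff every path between them is blocked by `Z`. -/
def DSep (G : V → V → Prop) (Z : Set V) (x y : V) : Prop :=
  ∀ p : List V, IsTrail G p x y → Blocked G Z p

open scoped Classical BigOperators

/-- Probability of an event under a pmf `p` on a finite sample space. -/
noncomputable def prSum {Ω : Type*} [Fintype Ω] (p : Ω → ℝ) (E : Ω → Prop) : ℝ :=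
  ∑ ω, if E ω then p ω else 0

/-- Conditional independence `X ⊥ Y | Z` under the pmf `p`. -/
def CondIndep {Ω α β γ : Type*} [Fintype Ω] (p : Ω → ℝ)
    (X : Ω → α) (Y : Ω → β) (Z : Ω → γ) : Prop :=
  ∀ (x : α) (y : β) (z : γ), 0 < prSum p (fun ω => Z ω = z) →
    prSum p (fun ω => X ω = x ∧ Y ω = y ∧ Z ω = z) / prSum p (fun ω => Z ω = z) =
      (prSum p (fun ω => X ω = x ∧ Z ω = z) / prSum p (fun ω => Z ω = z)) *
        (prSum p (fun ω => Y ω = y ∧ Z ω = z) / prSum p (fun ω => Z ω = z))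

section aux
set_option linter.unusedSectionVars false
variable {ι κ : Type*} [Fintype ι] [DecidableEq ι] [Fintype κ]

/-- Extension of a partial assignment off `m` by the value `a` at `m`. -/
def extAt (m : ι) (a : κ) (y : {j : ι // j ≠ m} → κ) : ι → κ :=
  fun k => if h : k = m then a else y ⟨k, h⟩

lemma extAt_self (m : ι) (a : κ) (y : {j : ι // j ≠ m} → κ) : extAt m a y m = a := by
  simp [extAt]

lemma extAt_ne (m : ι) (a : κ) (y : {j : ι // j ≠ m} → κ) {k : ι} (h : k ≠ m) :
    extAt m a y k = y ⟨k, h⟩ := by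
  simp [extAt, h]

lemma extAt_agree (m : ι) (a a' : κ) (y : {j : ι // j ≠ m} → κ) :
    ∀ k, k ≠ m → extAt m a y k = extAt m a' y k := by
  intro k hk; rw [extAt_ne m a y hk, extAt_ne m a' y hk]

lemma sum_split (m : ι) (F : (ι → κ) → ℝ) :
    ∑ x : ι → κ, F x = ∑ a : κ, ∑ y : {j : ι // j ≠ m} → κ, F (extAt m a y) := by
  rw [← Equiv.sum_comp (Equiv.funSplitAt m κ).symm F, Fintype.sum_prod_type]
  refine Finset.sum_congr rfl fun a _ => Finset.sum_congr rfl fun y _ => ?_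
  congr 1
  funext k
  by_cases h : k = m
  · subst h; simp [extAt, Equiv.funSplitAt]
  · simp [extAt, h, Equiv.funSplitAt]

/-- Fixing the value at coordinate `m` of a function not depending on coordinate `m`. -/
lemma sum_fix (m : ι) (a : κ) (F : (ι → κ) → ℝ)
    (hF : ∀ x x' : ι → κ, (∀ k, k ≠ m → x k = x' k) → F x = F x') :
    (Fintype.card κ : ℝ) * ∑ x : ι → κ, (if x m = a then F x else 0)
      = ∑ x : ι → κ, F x := by
  rw [sum_split m F, sum_split m (fun x => if x m = a then F x else 0)]
  have h1 : ∀ a' : κ, ∑ y : {j : ι // j ≠ m} → κ,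
      (if extAt m a' y m = a then F (extAt m a' y) else 0)
      = if a' = a then ∑ y : {j : ι // j ≠ m} → κ, F (extAt m a y) else 0 := by
    intro a'
    by_cases h : a' = a
    · subst h
      simp only [extAt_self, if_pos rfl, if_true, eq_self_iff_true]
    · simp only [extAt_self, if_neg h, Finset.sum_const_zero]
  rw [Finset.sum_congr rfl fun a' _ => h1 a']
  rw [Finset.sum_ite_eq' Finset.univ a
    (fun _ => ∑ y : {j : ι // j ≠ m} → κ, F (extAt m a y)), if_pos (Finset.mem_univ a)]
  have h2 : ∀ a' : κ, ∑ y : {j : ι // j ≠ m} → κ, F (extAt m a' y)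
      = ∑ y : {j : ι // j ≠ m} → κ, F (extAt m a y) := fun a' =>
    Finset.sum_congr rfl fun y _ => hF _ _ (extAt_agree m a' a y)
  rw [Finset.sum_congr rfl fun a' _ => h2 a', Finset.sum_const, Finset.card_univ,
    nsmul_eq_mul]

/-- Summing out the factor of node `m`. -/
lemma sum_f (m : ι) [Nonempty κ] (fm : κ → (ι → κ) → ℝ)
    (hf1 : ∀ x, ∑ b : κ, fm b x = 1)
    (hfl : ∀ b (x x' : ι → κ), (∀ k, k ≠ m → x k = x' k) → fm b x = fm b x')
    (F : (ι → κ) → ℝ)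
    (hF : ∀ x x' : ι → κ, (∀ k, k ≠ m → x k = x' k) → F x = F x') :
    (Fintype.card κ : ℝ) * ∑ x : ι → κ, fm (x m) x * F x = ∑ x : ι → κ, F x := by
  obtain ⟨a₀⟩ := ‹Nonempty κ›
  rw [sum_split m F, sum_split m (fun x => fm (x m) x * F x)]
  have h1 : ∀ a' : κ, ∑ y : {j : ι // j ≠ m} → κ,
      fm (extAt m a' y m) (extAt m a' y) * F (extAt m a' y)
      = ∑ y : {j : ι // j ≠ m} → κ, fm a' (extAt m a₀ y) * F (extAt m a₀ y) := by
    intro a'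
    refine Finset.sum_congr rfl fun y _ => ?_
    rw [extAt_self, hfl a' _ _ (extAt_agree m a' a₀ y), hF _ _ (extAt_agree m a' a₀ y)]
  rw [Finset.sum_congr rfl fun a' _ => h1 a', Finset.sum_comm]
  have h2 : ∑ y : {j : ι // j ≠ m} → κ, ∑ a' : κ, fm a' (extAt m a₀ y) * F (extAt m a₀ y)
      = ∑ y : {j : ι // j ≠ m} → κ, F (extAt m a₀ y) := by
    refine Finset.sum_congr rfl fun y _ => ?_
    rw [← Finset.sum_mul, hf1, one_mul]
  rw [h2]
  have h3 : ∀ a' : κ, ∑ y : {j : ι // j ≠ m} → κ, F (extAt m a' y)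
      = ∑ y : {j : ι // j ≠ m} → κ, F (extAt m a₀ y) := fun a' =>
    Finset.sum_congr rfl fun y _ => hF _ _ (extAt_agree m a' a₀ y)
  rw [Finset.sum_congr rfl fun a' _ => h3 a', Finset.sum_const, Finset.card_univ,
    nsmul_eq_mul]

/-- Marginalization over the complement of an ancestrally closed set. -/
lemma marginal {G : ι → ι → Prop} [Nonempty κ] (hG : Acyclic G)
    (P : (ι → κ) → ℝ) (f : (i : ι) → κ → (ι → κ) → ℝ)
    (hf1 : ∀ (i : ι) (x : ι → κ), ∑ a : κ, f i a x = 1)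
    (hlocal : ∀ (i : ι) (a : κ) (x x' : ι → κ),
      (∀ j, G j i → x j = x' j) → f i a x = f i a x')
    (hfac : ∀ x : ι → κ, P x = ∏ i, f i (x i) x) :
    ∀ (n : ℕ) (S : Finset ι), (Finset.univ \ S).card = n →
    (∀ k ∈ S, ∀ p, G p k → p ∈ S) →
    ∀ g : (ι → κ) → ℝ, (∀ x x' : ι → κ, (∀ k ∈ S, x k = x' k) → g x = g x') →
    ∑ x : ι → κ, g x * ∏ k ∈ S, f k (x k) x
      = (Fintype.card κ : ℝ) ^ n * ∑ x : ι → κ, g x * P x := by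
  intro n
  induction n with
  | zero =>
    intro S hcard hcl g hg
    have hS : S = Finset.univ := by
      have h := Finset.card_eq_zero.mp hcard
      have := Finset.sdiff_eq_empty_iff_subset.mp h
      exact Finset.eq_univ_iff_forall.mpr fun k => this (Finset.mem_univ k)
    subst hS
    simp only [pow_zero, one_mul]
    exact Finset.sum_congr rfl fun x _ => by rw [hfac x]
  | succ n ih =>
    intro S hcard hcl g hg
    have hne : (Finset.univ \ S).Nonempty := by
      rw [← Finset.card_pos, hcard]; omega
    haveI : IsTrans ι (Relation.TransGen G) := ⟨fun _ _ _ => Relation.TransGen.trans⟩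
    haveI : IsIrrefl ι (Relation.TransGen G) := ⟨hG⟩
    obtain ⟨m, hmT, hmin⟩ :=
      (Finite.wellFounded_of_trans_of_irrefl (Relation.TransGen G)).has_min
        (↑(Finset.univ \ S)) (Finset.coe_nonempty.mpr hne)
    have hmS : m ∉ S := (Finset.mem_sdiff.mp hmT).2
    have hparm : ∀ p, G p m → p ∈ S := by
      intro p hp
      by_contra hpS
      exact hmin p (Finset.mem_coe.mpr (Finset.mem_sdiff.mpr ⟨Finset.mem_univ p, hpS⟩))
        (Relation.TransGen.single hp)
    have hmm : ∀ p, G p m → p ≠ m := fun p hp he => hmS (he ▸ hparm p hp)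
    set S' := insert m S with hS'
    have hclS' : ∀ k ∈ S', ∀ p, G p k → p ∈ S' := by
      intro k hk p hp
      rcases Finset.mem_insert.mp hk with h | h
      · subst h; exact Finset.mem_insert_of_mem (hparm p hp)
      · exact Finset.mem_insert_of_mem (hcl k h p hp)
    have hmT2 : m ∈ Finset.univ \ S := hmT
    have hcard' : (Finset.univ \ S').card = n := by
      rw [hS', Finset.sdiff_insert, Finset.card_erase_of_mem hmT2, hcard]
      omega
    have hg' : ∀ x x' : ι → κ, (∀ k ∈ S', x k = x' k) → g x = g x' :=
      fun x x' h => hg x x' fun k hk => h k (Finset.mem_insert_of_mem hk)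
    have hIH := ih S' hcard' hclS' g hg'
    -- F doesn't depend on coordinate m
    set F : (ι → κ) → ℝ := fun x => g x * ∏ k ∈ S, f k (x k) x with hF
    have hFm : ∀ x x' : ι → κ, (∀ k, k ≠ m → x k = x' k) → F x = F x' := by
      intro x x' h
      have hgx : g x = g x' := hg x x' fun k hk => h k (fun he => hmS (he ▸ hk))
      have hpr : ∏ k ∈ S, f k (x k) x = ∏ k ∈ S, f k (x' k) x' := by
        refine Finset.prod_congr rfl fun k hk => ?_
        have hk' : x k = x' k := h k (fun he => hmS (he ▸ hk))
        rw [hk']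
        exact hlocal k (x' k) x x' fun p hp =>
          h p (fun he => hmS (he ▸ hcl k hk p hp))
      rw [hF]; dsimp only; rw [hgx, hpr]
    have hflm : ∀ b (x x' : ι → κ), (∀ k, k ≠ m → x k = x' k) → f m b x = f m b x' :=
      fun b x x' h => hlocal m b x x' fun p hp => h p (hmm p hp)
    have hsplit : ∑ x : ι → κ, g x * ∏ k ∈ S', f k (x k) x
        = ∑ x : ι → κ, f m (x m) x * F x := by
      refine Finset.sum_congr rfl fun x _ => ?_
      rw [hS', Finset.prod_insert hmS, hF]; ring
    have hsf := sum_f m (f m) (hf1 m) hflm F hFm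
    rw [← hsplit, hIH] at hsf
    rw [← hsf]; ring

end aux

/-- If a joint pmf factorizes according to a DAG `G` as the product of conditional
distributions of each node given its parents, then each variable is conditionally
independent of any single non-parent non-descendant given its parents. -/
theorem markov_of_factorization {ι κ : Type*} [Fintype ι] [DecidableEq ι]
    [Fintype κ] [Nonempty κ]
    (G : ι → ι → Prop) (hG : Acyclic G)
    (P : (ι → κ) → ℝ) (f : (i : ι) → κ → (ι → κ) → ℝ)
    (hnn : ∀ x, 0 ≤ P x) (hsum : ∑ x : ι → κ, P x = 1)
    (hfnn : ∀ i a x, 0 ≤ f i a x)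
    (hf1 : ∀ (i : ι) (x : ι → κ), ∑ a : κ, f i a x = 1)
    (hlocal : ∀ (i : ι) (a : κ) (x x' : ι → κ),
      (∀ j, G j i → x j = x' j) → f i a x = f i a x')
    (hfac : ∀ x : ι → κ, P x = ∏ i, f i (x i) x)
    (i j : ι) (hij : j ≠ i) (hnp : ¬ G j i) (hnd : ¬ Descendant G i j) :
    CondIndep P (fun x => x i) (fun x => x j)
      (fun x => fun k : {k : ι // G k i} => x k.1) := by
  intro a b z hz
  set Z : (ι → κ) → ({k : ι // G k i} → κ) := fun x => fun k => x k.1 with hZdef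
  -- acyclicity consequences
  have hirr : ∀ k, ¬ G k k := fun k h => hG k (Relation.TransGen.single h)
  -- the set of strict nondescendants of i
  set S : Finset ι :=
    Finset.univ.filter (fun k => k ≠ i ∧ ¬ Relation.TransGen G i k) with hSdef
  have hmemS : ∀ k, k ∈ S ↔ (k ≠ i ∧ ¬ Relation.TransGen G i k) := by
    intro k; simp [hSdef]
  have hiS : i ∉ S := fun h => ((hmemS i).1 h).1 rfl
  have hjS : j ∈ S := (hmemS j).2 ⟨hij, hnd⟩
  have hparS : ∀ k, G k i → k ∈ S := by
    intro k hk
    refine (hmemS k).2 ⟨fun he => hirr i (he ▸ hk), fun hd => hG i (hd.tail hk)⟩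
  have hclS : ∀ k ∈ S, ∀ p, G p k → p ∈ S := by
    intro k hk p hp
    obtain ⟨hki, hkd⟩ := (hmemS k).1 hk
    refine (hmemS p).2 ⟨?_, ?_⟩
    · rintro rfl; exact hkd (Relation.TransGen.single hp)
    · intro hd; exact hkd (hd.tail hp)
  have hGiS : ∀ k ∈ S, ¬ G i k := fun k hk h =>
    ((hmemS k).1 hk).2 (Relation.TransGen.single h)
  set S' : Finset ι := insert i S with hS'def
  have hclS' : ∀ k ∈ S', ∀ p, G p k → p ∈ S' := by
    intro k hk p hp
    rcases Finset.mem_insert.mp hk with h | h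
    · subst h; exact Finset.mem_insert_of_mem (hparS p hp)
    · exact Finset.mem_insert_of_mem (hclS k h p hp)
  have hiT : i ∈ Finset.univ \ S := Finset.mem_sdiff.mpr ⟨Finset.mem_univ i, hiS⟩
  set nS : ℕ := (Finset.univ \ S).card with hnS
  set nS' : ℕ := (Finset.univ \ S').card with hnS'
  have hcards : nS = nS' + 1 := by
    rw [hnS', hS'def, Finset.sdiff_insert, Finset.card_erase_of_mem hiT, hnS]
    have : 0 < (Finset.univ \ S).card := Finset.card_pos.mpr ⟨i, hiT⟩
    omega
  -- canonical value of the conditional factor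
  obtain ⟨c₀⟩ := ‹Nonempty κ›
  set x₀ : ι → κ := fun k => if h : G k i then z ⟨k, h⟩ else c₀ with hx₀
  set φ : ℝ := f i a x₀ with hφdef
  have hφ : ∀ x : ι → κ, Z x = z → f i a x = φ := by
    intro x hx
    refine hlocal i a x x₀ fun p hp => ?_
    have h1 : x p = z ⟨p, hp⟩ := congrFun hx ⟨p, hp⟩
    rw [h1, hx₀]; simp [hp]
  have hZS : ∀ x x' : ι → κ, (∀ k ∈ S, x k = x' k) → Z x = Z x' := by
    intro x x' h
    funext k
    exact h k.1 (hparS k.1 k.2)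
  have hcκ : (0:ℝ) < (Fintype.card κ : ℝ) := by
    exact_mod_cast Fintype.card_pos
  -- the key lemma
  have key : ∀ E : (ι → κ) → Prop,
      (∀ x x' : ι → κ, (∀ k ∈ S, x k = x' k) → (E x ↔ E x')) →
      (∀ x, E x → Z x = z) →
      prSum P (fun x => x i = a ∧ E x) = φ * prSum P E := by
    intro E hES hEZ
    set g : (ι → κ) → ℝ := fun x => if E x then 1 else 0 with hgdef
    set g' : (ι → κ) → ℝ := fun x => if x i = a ∧ E x then 1 else 0 with hg'def
    have hg : ∀ x x' : ι → κ, (∀ k ∈ S, x k = x' k) → g x = g x' := by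
      intro x x' h; rw [hgdef]; simp only
      by_cases hE : E x
      · rw [if_pos hE, if_pos ((hES x x' h).1 hE)]
      · rw [if_neg hE, if_neg (fun h' => hE ((hES x x' h).2 h'))]
    have hg' : ∀ x x' : ι → κ, (∀ k ∈ S', x k = x' k) → g' x = g' x' := by
      intro x x' h
      have hi : x i = x' i := h i (Finset.mem_insert_self i S)
      have hS : ∀ k ∈ S, x k = x' k := fun k hk => h k (Finset.mem_insert_of_mem hk)
      rw [hg'def]; simp only
      by_cases hE : x i = a ∧ E x
      · rw [if_pos hE, if_pos ⟨hi ▸ hE.1, (hES x x' hS).1 hE.2⟩]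
      · rw [if_neg hE, if_neg (fun h' => hE ⟨hi.symm ▸ h'.1, (hES x x' hS).2 h'.2⟩)]
    have hprE : prSum P E = ∑ x : ι → κ, g x * P x := by
      rw [prSum, hgdef]
      exact Finset.sum_congr rfl fun x _ => by by_cases hE : E x <;> simp [hE]
    have hprE' : prSum P (fun x => x i = a ∧ E x) = ∑ x : ι → κ, g' x * P x := by
      rw [prSum, hg'def]
      exact Finset.sum_congr rfl fun x _ => by
        by_cases hE : x i = a ∧ E x <;> simp [hE]
    have hM : ∑ x : ι → κ, g x * ∏ k ∈ S, f k (x k) x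
        = (Fintype.card κ : ℝ) ^ nS * ∑ x : ι → κ, g x * P x :=
      marginal hG P f hf1 hlocal hfac nS S rfl hclS g hg
    have hM' : ∑ x : ι → κ, g' x * ∏ k ∈ S', f k (x k) x
        = (Fintype.card κ : ℝ) ^ nS' * ∑ x : ι → κ, g' x * P x :=
      marginal hG P f hf1 hlocal hfac nS' S' rfl hclS' g' hg'
    -- rewrite the S' product sum
    have hpt : ∀ x : ι → κ, g' x * ∏ k ∈ S', f k (x k) x
        = φ * (if x i = a then g x * ∏ k ∈ S, f k (x k) x else 0) := by
      intro x
      rw [hS'def, Finset.prod_insert hiS]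
      by_cases hE : x i = a ∧ E x
      · have h1 : g' x = 1 := by rw [hg'def]; simp [hE]
        have h2 : g x = 1 := by rw [hgdef]; simp [hE.2]
        have h3 : f i (x i) x = φ := by rw [hE.1]; exact hφ x (hEZ x hE.2)
        rw [h1, h2, if_pos hE.1, h3]; ring
      · have h1 : g' x = 0 := by rw [hg'def]; simp [hE]
        rw [h1]
        by_cases hia : x i = a
        · have h2 : g x = 0 := by
            rw [hgdef]; simp only [ite_eq_right_iff]
            intro hEx; exact absurd ⟨hia, hEx⟩ hE
          rw [if_pos hia, h2]; ring
        · rw [if_neg hia]; ring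
    have hFdep : ∀ x x' : ι → κ, (∀ k, k ≠ i → x k = x' k) →
        g x * ∏ k ∈ S, f k (x k) x = g x' * ∏ k ∈ S, f k (x' k) x' := by
      intro x x' h
      have hgx : g x = g x' := hg x x' fun k hk => h k (fun he => hiS (he ▸ hk))
      have hpr : ∏ k ∈ S, f k (x k) x = ∏ k ∈ S, f k (x' k) x' := by
        refine Finset.prod_congr rfl fun k hk => ?_
        have hk' : x k = x' k := h k (fun he => hiS (he ▸ hk))
        rw [hk']
        refine hlocal k (x' k) x x' fun p hp => ?_
        refine h p (fun he => ?_)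
        exact hGiS k hk (he ▸ hp)
      rw [hgx, hpr]
    have hfix := sum_fix i a (fun x => g x * ∏ k ∈ S, f k (x k) x) hFdep
    -- assemble
    have e1 : ∑ x : ι → κ, g' x * ∏ k ∈ S', f k (x k) x
        = φ * ∑ x : ι → κ, (if x i = a then g x * ∏ k ∈ S, f k (x k) x else 0) := by
      rw [Finset.sum_congr rfl fun x _ => hpt x, Finset.mul_sum]
    have e2 : (Fintype.card κ : ℝ) * ((Fintype.card κ : ℝ) ^ nS' * prSum P (fun x => x i = a ∧ E x))
        = (Fintype.card κ : ℝ) * ((Fintype.card κ : ℝ) ^ nS' * (φ * prSum P E)) := by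
      have lhs1 : (Fintype.card κ : ℝ) * ((Fintype.card κ : ℝ) ^ nS' * prSum P (fun x => x i = a ∧ E x))
          = (Fintype.card κ : ℝ) * (φ * ∑ x : ι → κ, (if x i = a then g x * ∏ k ∈ S, f k (x k) x else 0)) := by
        rw [hprE', ← hM', e1]
      rw [lhs1]
      have lhs2 : (Fintype.card κ : ℝ) * (φ * ∑ x : ι → κ, (if x i = a then g x * ∏ k ∈ S, f k (x k) x else 0))
          = φ * ((Fintype.card κ : ℝ) * ∑ x : ι → κ, (if x i = a then g x * ∏ k ∈ S, f k (x k) x else 0)) := by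
        ring
      rw [lhs2, hfix, hM, ← hprE, hcards]
      ring
    have h1 := mul_left_cancel₀ (ne_of_gt hcκ) e2
    have h2 := mul_left_cancel₀ (pow_ne_zero nS' (ne_of_gt hcκ)) h1
    exact h2
  -- apply the key lemma twice
  have hB : prSum P (fun x => x i = a ∧ Z x = z) = φ * prSum P (fun x => Z x = z) := by
    refine key (fun x => Z x = z) ?_ (fun x hx => hx)
    intro x x' h
    simp only [hZS x x' h]
  have hD : prSum P (fun x => x i = a ∧ (x j = b ∧ Z x = z))
      = φ * prSum P (fun x => x j = b ∧ Z x = z) := by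
    refine key (fun x => x j = b ∧ Z x = z) ?_ (fun x hx => hx.2)
    intro x x' h
    simp only [hZS x x' h, h j hjS]
  have hA : prSum P (fun x => Z x = z) ≠ 0 := ne_of_gt hz
  show prSum P (fun x => x i = a ∧ x j = b ∧ Z x = z) / prSum P (fun x => Z x = z)
      = (prSum P (fun x => x i = a ∧ Z x = z) / prSum P (fun x => Z x = z)) *
        (prSum P (fun x => x j = b ∧ Z x = z) / prSum P (fun x => Z x = z))
  rw [hB, hD]
  field_simp
end

section
/- In a DAG, if X and Y are not adjacent and Y is not a descendant of X, then Pa(X), the parent set of X, d-separates X from Y. -/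
variable {V : Type*}

/-- In a DAG, if `x` and `y` are not adjacent and `y` is not a descendant of `x`,
then `Pa(x)` d-separates `x` from `y`. -/
theorem pa_dsep [Fintype V] (G : V → V → Prop) (hG : Acyclic G)
    (x y : V) (hxy : x ≠ y) (hnadj : ¬ G x y ∧ ¬ G y x)
    (hnd : ¬ Descendant G x y) :
    DSep G (Pa G x) x y := by
  have aux : ∀ (q : List V) (a b : V),
      List.Chain' (fun u v => G u v ∨ G v u) (a :: b :: q) → G a b →
      Relation.ReflTransGen G x a → (a :: b :: q).getLast? = some y →
      ∃ a' w b', [a', w, b'] <:+: (a :: b :: q) ∧ G a' w ∧ G b' w ∧ w ∉ Pa G x ∧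
        ∀ d, Relation.TransGen G w d → d ∉ Pa G x := by
    intro q
    induction q with
    | nil =>
      intro a b _ hab hxa hlast
      simp only [List.getLast?, Option.some.injEq] at hlast
      exact absurd (hlast ▸ Relation.TransGen.tail' hxa hab) hnd
    | cons c q' ih =>
      intro a b hchain hab hxa hlast
      obtain ⟨_, hchain'⟩ := List.isChain_cons_cons.mp hchain
      have hbc : G b c ∨ G c b := (List.isChain_cons_cons.mp hchain').1
      rcases hbc with hbc | hcb
      · obtain ⟨a', w, b', hinf, h1, h2, h3, h4⟩ :=
          ih b c hchain' hbc (hxa.tail hab)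
            (by rw [List.getLast?_cons_cons] at hlast ⊢; exact hlast)
        exact ⟨a', w, b', hinf.trans (List.suffix_cons a _).isInfix, h1, h2, h3, h4⟩
      · have hxb : Relation.TransGen G x b := Relation.TransGen.tail' hxa hab
        refine ⟨a, b, c, ⟨[], q', rfl⟩, hab, hcb, ?_, ?_⟩
        · intro hbx
          exact hG x (hxb.trans (Relation.TransGen.single hbx))
        · intro d hbd hdx
          exact hG x ((hxb.trans hbd).trans (Relation.TransGen.single hdx))
  intro p htrail
  obtain ⟨hchain, hhead, hlast, hnodup, hlen⟩ := htrail
  obtain _ | ⟨x', t⟩ := p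
  · simp at hhead
  simp only [List.head?, Option.some.injEq] at hhead
  obtain rfl := hhead.symm
  obtain _ | ⟨w, rest⟩ := t
  · simp at hlen
  have hxw : G x w ∨ G w x := (List.isChain_cons_cons.mp hchain).1
  rcases hxw with hxw | hwx
  · exact Or.inr (aux rest x w hchain hxw Relation.ReflTransGen.refl hlast)
  · obtain _ | ⟨b, rest'⟩ := rest
    · simp only [List.getLast?, Option.some.injEq] at hlast
      exact absurd (hlast ▸ hwx) hnadj.2
    · refine Or.inl ⟨x, w, b, ⟨[], rest', rfl⟩, ?_, hwx⟩
      rintro ⟨hxw, -⟩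
      exact hG x (Relation.TransGen.head hxw (Relation.TransGen.single hwx))
end

section
/- False-edge removal (Lemma 5): under faithfulness, if X and Y are non-adjacent in the true DAG, then at least one of the two calls—local search around X with candidate sets drawn from the potential neighbors of X, or around Y with candidate sets from the potential neighbors of Y—finds a d-separating set, because either Pa(X) or Pa(Y) d-separates X and Y and is contained in the respective candidate neighbor set. -/
variable {V : Type*}

private lemma blocked_of_infix {G : V → V → Prop} {Z : Set V} {s p : List V}
    (hsp : s <:+: p) (h : Blocked G Z s) : Blocked G Z p := by
  rcases h with ⟨a,w,b,hi,h1,h2⟩ | ⟨a,w,b,hi,h1,h2,h3,h4⟩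
  · exact Or.inl ⟨a,w,b,hi.trans hsp,h1,h2⟩
  · exact Or.inr ⟨a,w,b,hi.trans hsp,h1,h2,h3,h4⟩

private lemma aux_walk {G : V → V → Prop} (hG : Acyclic G) {x y : V}
    (hny : ¬ Relation.TransGen G x y) :
    ∀ (q : List V) (a b : V), G a b → Relation.TransGen G x b →
      (a :: b :: q).Chain' (fun u v => G u v ∨ G v u) →
      (a :: b :: q).getLast? = some y →
      Blocked G (Pa G x) (a :: b :: q) := by
  intro q
  induction q with
  | nil =>
    intro a b hab hxb _ hlast
    simp at hlast
    exact absurd (hlast ▸ hxb) hny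
  | cons c q ih =>
    intro a b hab hxb hchain hlast
    unfold List.Chain' at hchain
    rw [List.isChain_cons_cons] at hchain
    obtain ⟨-, hchain⟩ := hchain
    have hbc := (List.isChain_cons_cons.mp hchain).1
    rcases hbc with hbc | hcb
    · have := ih b c hbc (hxb.tail hbc) hchain (by simpa using hlast)
      exact blocked_of_infix (List.suffix_cons a _).isInfix this
    · refine Or.inr ⟨a, b, c, ⟨[], q, rfl⟩, hab, hcb, ?_, ?_⟩
      · intro h; exact hG x (hxb.trans (Relation.TransGen.single h))
      · intro d hd hdx; exact hG x ((hxb.trans hd).trans (Relation.TransGen.single hdx))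

private lemma dsep_pa {G : V → V → Prop} (hG : Acyclic G) {x y : V}
    (hnxy : ¬ G x y) (hnyx : ¬ G y x) (hny : ¬ Relation.TransGen G x y) :
    DSep G (Pa G x) x y := by
  rintro p ⟨hchain, hhead, hlast, -, hlen⟩
  match p with
  | [] => simp at hhead
  | [a] => simp at hlen
  | a :: v :: t =>
    have hax : a = x := by simpa using hhead
    subst hax
    have hedge := (List.isChain_cons_cons.mp hchain).1
    rcases hedge with hxv | hvx
    · exact aux_walk hG hny t a v hxv (Relation.TransGen.single hxv) hchain hlast
    · match t, hlast with
      | [], hlast =>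
        have hvy : v = y := by simpa using hlast
        exact absurd (hvy ▸ hvx) hnyx
      | w :: t', _ =>
        refine Or.inl ⟨a, v, w, ⟨[], t', rfl⟩, ?_, hvx⟩
        rintro ⟨h1, -⟩
        exact hG a (Relation.TransGen.head h1 (Relation.TransGen.single hvx))

private lemma dsep_symm {G : V → V → Prop} {Z : Set V} {x y : V}
    (h : DSep G Z y x) : DSep G Z x y := by
  rintro p ⟨hc, hh, hl, hnd, hlen⟩
  have hrev : IsTrail G p.reverse y x := by
    refine ⟨?_, by simpa using hl, by simpa using hh, by simpa using hnd, by simpa using hlen⟩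
    unfold List.Chain'
    rw [List.isChain_reverse]
    exact hc.imp (fun a b => Or.symm)
  have hb := h p.reverse hrev
  have key : ∀ a w b : V, [a, w, b] <:+: p.reverse → [b, w, a] <:+: p := by
    intro a w b hi
    have := hi.reverse
    simpa using this
  rcases hb with ⟨a,w,b,hi,h1,h2⟩ | ⟨a,w,b,hi,h1,h2,h3,h4⟩
  · exact Or.inl ⟨b, w, a, key a w b hi, fun hc => h1 ⟨hc.2, hc.1⟩, h2⟩
  · exact Or.inr ⟨b, w, a, key a w b hi, h2, h1, h3, h4⟩

/-- False-edge removal (Lemma 5): if `x` and `y` are non-adjacent in the true DAG,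
and the candidate neighbor sets around `x` and around `y` contain the respective
true parents, then one of the two local searches finds a d-separating set. -/
theorem false_edge_removed [Fintype V] (G : V → V → Prop) (hG : Acyclic G)
    (x y : V) (hxy : x ≠ y) (hnadj : ¬ G x y ∧ ¬ G y x)
    (Cx Cy : Set V) (hCx : Pa G x ⊆ Cx) (hCy : Pa G y ⊆ Cy) :
    (∃ Z ⊆ Cx, DSep G Z x y) ∨ (∃ Z ⊆ Cy, DSep G Z x y) := by
  by_cases hd : Relation.TransGen G x y
  · have hnd : ¬ Relation.TransGen G y x := fun h => hG x (hd.trans h)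
    exact Or.inr ⟨Pa G y, hCy, dsep_symm (dsep_pa hG hnadj.2 hnadj.1 hnd)⟩
  · exact Or.inl ⟨Pa G x, hCx, dsep_pa hG hnadj.1 hnadj.2 hd⟩
end
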